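/- Coverage of the Pooling CDFs method, lower bound: Suppose the groups Z̃_1,…,Z̃_{K+1} satisfy hierarchical exchangeability, a measurable score function s is fitted on training groups Z̃_1,…,Z̃_{K₀}, the Pooling CDFs prediction set is Ĉ(x) = {y : s(x,y) ≤ T} with T = inf{t : (1/K₁) Σ_{k=K₀+1}^{K} (1/N_k) Σ_{i=1}^{N_k} 1{s(Z_{k,i}) ≤ t} ≥ 1−α} (K₁ = K − K₀), and the test point is (X_test, Y_test) = Z_{K+1,1}. Then P(Y_test ∈ Ĉ(X_test)) ≥ 1 − α − (1−α)/(K₁+1). -/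

import Mathlib

open MeasureTheory ProbabilityTheory
open scoped ENNReal
set_option linter.unusedSectionVars false

noncomputable section

/-- Extend a permutation of `Fin m` to `ℕ` by the identity outside `{0, …, m-1}`. -/
def permExt {m : ℕ} (σ : Equiv.Perm (Fin m)) : ℕ → ℕ :=
  fun i => if h : i < m then (σ ⟨i, h⟩ : ℕ) else i

/-- The representation of the groups `0, …, L-1` of a hierarchical data set:
group `k` is recorded as the pair of its size `N k ω` and its sequence of observations. -/
def hierData {Ω 𝒵 : Type*} (L : ℕ) (N : ℕ → Ω → ℕ) (Z : ℕ → ℕ → Ω → 𝒵) :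
    Ω → Fin L → ℕ × (ℕ → 𝒵) :=
  fun ω k => (N k.1 ω, fun i => Z k.1 i ω)

/-- Hierarchical exchangeability (Definition 1.1) of the groups `0, …, L-1`:
(i) the groups are exchangeable with each other, and (ii) for each `k` and each `m`
with `P(N_k = m) > 0`, conditionally on `N_k = m` the first `m` observations within
group `k` are exchangeable. -/
def HierExch {Ω 𝒵 : Type*} [MeasurableSpace Ω] [MeasurableSpace 𝒵] (L : ℕ)
    (P : Measure Ω) (N : ℕ → Ω → ℕ) (Z : ℕ → ℕ → Ω → 𝒵) : Prop :=
  (∀ σ : Equiv.Perm (Fin L),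
      Measure.map (fun ω => fun k : Fin L => hierData L N Z ω (σ k)) P
        = Measure.map (hierData L N Z) P) ∧
  (∀ k, k < L → ∀ m : ℕ, 0 < P {ω | N k ω = m} → ∀ σ : Equiv.Perm (Fin m),
      Measure.map
          (hierData L N fun k' i => if k' = k then Z k' (permExt σ i) else Z k' i)
          (ProbabilityTheory.cond P {ω | N k ω = m})
        = Measure.map (hierData L N Z) (ProbabilityTheory.cond P {ω | N k ω = m}))

/-- The `(1-β)`-quantile `Q_{1-β}(μ) = inf {t : μ((-∞, t]) ≥ 1-β}` of a distribution `μ`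
on the extended real line. -/
def erealQuantile (β : ℝ) (μ : Measure EReal) : EReal :=
  sInf {t : EReal | ENNReal.ofReal β ≤ μ (Set.Iic t)}

/-- The Pooling-CDFs threshold: the `(1-α)`-quantile of the pooled empirical distribution
`Σ_{k=K₀}^{K-1} Σ_{i<n k} (1/(K₁·(n k))) δ_{sc k i}`, where `K₁ = K - K₀`. -/
def poolThreshold (α : ℝ) (K₀ K : ℕ) (n : ℕ → ℕ) (sc : ℕ → ℕ → ℝ) : EReal :=
  erealQuantile (1 - α)
    (∑ k ∈ Finset.Ico K₀ K, ∑ i ∈ Finset.range (n k),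
      (((K - K₀ : ℕ) : ℝ≥0∞) * (n k : ℝ≥0∞))⁻¹ • Measure.dirac ((sc k i : EReal)))

namespace PoolingAux

variable {ι : Type*}

/-- The "CDF" of a finite weighted point mass collection. -/
def G (F : Finset ι) (x : ι → EReal) (c : ι → ℝ≥0∞) (t : EReal) : ℝ≥0∞ :=
  ∑ j ∈ F.filter (fun j => x j ≤ t), c j

lemma G_mono (F : Finset ι) (x : ι → EReal) (c : ι → ℝ≥0∞) {t t' : EReal} (h : t ≤ t') :
    G F x c t ≤ G F x c t' := by
  apply Finset.sum_le_sum_of_subset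
  intro j hj
  simp only [Finset.mem_filter] at *
  exact ⟨hj.1, hj.2.trans h⟩

lemma exists_atom (F : Finset ι) (x : ι → EReal) (c : ι → ℝ≥0∞) {β : ℝ≥0∞} (hβ : 0 < β)
    {t : EReal} (ht : β ≤ G F x c t) :
    ∃ j ∈ F, x j ≤ t ∧ β ≤ G F x c (x j) := by
  have hne : (F.filter (fun j => x j ≤ t)).Nonempty := by
    by_contra h
    rw [Finset.not_nonempty_iff_eq_empty] at h
    rw [G, h, Finset.sum_empty] at ht
    exact absurd (lt_of_lt_of_le hβ ht) (lt_irrefl 0)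
  obtain ⟨j₂, hj₂, hmax⟩ := Finset.exists_max_image _ x hne
  simp only [Finset.mem_filter] at hj₂
  refine ⟨j₂, hj₂.1, hj₂.2, le_trans ht ?_⟩
  apply Finset.sum_le_sum_of_subset
  intro j hj
  rw [Finset.mem_filter] at hj ⊢
  exact ⟨hj.1, hmax j (Finset.mem_filter.2 ⟨hj.1, hj.2⟩)⟩

/-- The quantile as sInf. -/
def q (β : ℝ≥0∞) (μ : Measure EReal) : EReal := sInf {t | β ≤ μ (Set.Iic t)}

lemma q_le_iff_aux {β : ℝ≥0∞} (hβ : 0 < β) (F : Finset ι) (x : ι → EReal) (c : ι → ℝ≥0∞)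
    (s : EReal) :
    s ≤ sInf {t | β ≤ G F x c t} ↔ ∀ j ∈ F, β ≤ G F x c (x j) → s ≤ x j := by
  set S := {t | β ≤ G F x c t} with hS
  rcases Set.eq_empty_or_nonempty S with hSe | hSne
  · rw [hSe]
    simp only [sInf_empty, le_top, true_iff]
    intro j hj hGj
    have : x j ∈ S := hGj
    rw [hSe] at this
    exact this.elim
  · constructor
    · intro hs j hj hGj
      exact hs.trans (sInf_le (show x j ∈ S from hGj))
    · intro h
      obtain ⟨t₀, ht₀⟩ := hSne
      obtain ⟨j₁, hj₁F, _, hGj₁⟩ := exists_atom F x c hβ ht₀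
      -- find minimal atom in S
      have hA : (F.filter (fun j => β ≤ G F x c (x j))).Nonempty :=
        ⟨j₁, Finset.mem_filter.2 ⟨hj₁F, hGj₁⟩⟩
      obtain ⟨j₀, hj₀, hmin⟩ := Finset.exists_min_image _ x hA
      simp only [Finset.mem_filter] at hj₀
      have hq : sInf S = x j₀ := by
        apply le_antisymm (sInf_le (show x j₀ ∈ S from hj₀.2))
        apply le_sInf
        intro t ht
        obtain ⟨j, hjF, hjt, hGj⟩ := exists_atom F x c hβ ht
        exact le_trans (hmin j (Finset.mem_filter.2 ⟨hjF, hGj⟩)) hjt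
      rw [hq]
      exact h j₀ hj₀.1 hj₀.2

lemma q_mem {β : ℝ≥0∞} (hβ : 0 < β) (F : Finset ι) (x : ι → EReal) (c : ι → ℝ≥0∞)
    (hSne : {t | β ≤ G F x c t}.Nonempty) :
    β ≤ G F x c (sInf {t | β ≤ G F x c t}) := by
  obtain ⟨t₀, ht₀⟩ := hSne
  obtain ⟨j₁, hj₁F, _, hGj₁⟩ := exists_atom F x c hβ ht₀
  have hA : (F.filter (fun j => β ≤ G F x c (x j))).Nonempty :=
    ⟨j₁, Finset.mem_filter.2 ⟨hj₁F, hGj₁⟩⟩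
  obtain ⟨j₀, hj₀, hmin⟩ := Finset.exists_min_image _ x hA
  simp only [Finset.mem_filter] at hj₀
  have hq : sInf {t | β ≤ G F x c t} = x j₀ := by
    apply le_antisymm (sInf_le (show x j₀ ∈ {t | β ≤ G F x c t} from hj₀.2))
    apply le_sInf
    intro t ht
    obtain ⟨j, hjF, hjt, hGj⟩ := exists_atom F x c hβ ht
    exact le_trans (hmin j (Finset.mem_filter.2 ⟨hjF, hGj⟩)) hjt
  rw [hq]
  exact hj₀.2


/-- The pooled empirical measure. -/
def pm (K₀ M : ℕ) (n : ℕ → ℕ) (sc : ℕ → ℕ → ℝ) : Measure EReal :=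
  ∑ k ∈ Finset.Ico K₀ M, ∑ i ∈ Finset.range (n k),
    (((M - K₀ : ℕ) : ℝ≥0∞) * (n k : ℝ≥0∞))⁻¹ • Measure.dirac ((sc k i : EReal))

lemma pm_apply (K₀ M : ℕ) (n : ℕ → ℕ) (sc : ℕ → ℕ → ℝ) {s : Set EReal}
    (hs : MeasurableSet s) :
    pm K₀ M n sc s = ∑ k ∈ Finset.Ico K₀ M, ∑ i ∈ Finset.range (n k),
      (((M - K₀ : ℕ) : ℝ≥0∞) * (n k : ℝ≥0∞))⁻¹ * s.indicator 1 ((sc k i : EReal)) := by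
  rw [pm]
  rw [Measure.coe_finset_sum]
  rw [Finset.sum_apply]
  refine Finset.sum_congr rfl fun k _ => ?_
  rw [Measure.coe_finset_sum, Finset.sum_apply]
  refine Finset.sum_congr rfl fun i _ => ?_
  rw [Measure.smul_apply, Measure.dirac_apply' _ hs, smul_eq_mul]

lemma pm_Iic (K₀ M : ℕ) (n : ℕ → ℕ) (sc : ℕ → ℕ → ℝ) (t : EReal) :
    pm K₀ M n sc (Set.Iic t)
      = G ((Finset.Ico K₀ M).sigma fun k => Finset.range (n k))
          (fun j => (sc j.1 j.2 : EReal))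
          (fun j => (((M - K₀ : ℕ) : ℝ≥0∞) * (n j.1 : ℝ≥0∞))⁻¹) t := by
  rw [pm_apply _ _ _ _ measurableSet_Iic, G, Finset.sum_filter, Finset.sum_sigma]
  refine Finset.sum_congr rfl fun k _ => Finset.sum_congr rfl fun i _ => ?_
  by_cases h : (sc k i : EReal) ≤ t
  · simp [h, Set.indicator_of_mem (Set.mem_Iic.2 h)]
  · simp [h, Set.indicator_of_notMem (fun hc => h (Set.mem_Iic.1 hc))]

lemma pm_univ (K₀ M : ℕ) (hKM : K₀ < M) (n : ℕ → ℕ) (sc : ℕ → ℕ → ℝ)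
    (hn : ∀ k ∈ Finset.Ico K₀ M, 1 ≤ n k) :
    pm K₀ M n sc Set.univ = 1 := by
  rw [pm_apply _ _ _ _ MeasurableSet.univ]
  have hd : ((M - K₀ : ℕ) : ℝ≥0∞) ≠ 0 := by
    simp only [ne_eq, Nat.cast_eq_zero]
    omega
  have : ∀ k ∈ Finset.Ico K₀ M, ∑ i ∈ Finset.range (n k),
      (((M - K₀ : ℕ) : ℝ≥0∞) * (n k : ℝ≥0∞))⁻¹ * Set.univ.indicator 1 ((sc k i : EReal))
      = ((M - K₀ : ℕ) : ℝ≥0∞)⁻¹ := by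
    intro k hk
    have hnk : ((n k : ℕ) : ℝ≥0∞) ≠ 0 := by
      simp only [ne_eq, Nat.cast_eq_zero]
      have := hn k hk; omega
    simp only [Set.indicator_univ, Pi.one_apply, mul_one]
    rw [Finset.sum_const, Finset.card_range, nsmul_eq_mul]
    rw [ENNReal.mul_inv (Or.inl hd) (Or.inl (ENNReal.natCast_ne_top _))]
    rw [← mul_assoc, mul_comm ((n k : ℕ) : ℝ≥0∞), mul_assoc,
      ENNReal.mul_inv_cancel hnk (ENNReal.natCast_ne_top _), mul_one]
  rw [Finset.sum_congr rfl this, Finset.sum_const, Nat.card_Ico, nsmul_eq_mul]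
  exact ENNReal.mul_inv_cancel hd (ENNReal.natCast_ne_top _)


lemma pm_congr (K₀ M : ℕ) {n n' : ℕ → ℕ} {sc sc' : ℕ → ℕ → ℝ}
    (hn : ∀ k ∈ Finset.Ico K₀ M, n k = n' k)
    (hsc : ∀ k ∈ Finset.Ico K₀ M, ∀ i ∈ Finset.range (n k), sc k i = sc' k i) :
    pm K₀ M n sc = pm K₀ M n' sc' := by
  rw [pm, pm]
  refine Finset.sum_congr rfl fun k hk => ?_
  rw [← hn k hk]
  exact Finset.sum_congr rfl fun i hi => by rw [hn k hk, hsc k hk i hi]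

lemma qn_congr {β : ℝ≥0∞} {μ ν : Measure EReal} (h : ∀ t : EReal, μ (Set.Iic t) = ν (Set.Iic t)) :
    sInf {t | β ≤ μ (Set.Iic t)} = sInf {t | β ≤ ν (Set.Iic t)} := by
  congr 1
  ext t
  rw [Set.mem_setOf_eq, Set.mem_setOf_eq, h t]

/-- Invariance of the pooled measure under a permutation of the groups. -/
lemma pm_perm (K₀ M : ℕ) (n : ℕ → ℕ) (sc : ℕ → ℕ → ℝ) (p pinv : ℕ → ℕ)
    (hp : ∀ k ∈ Finset.Ico K₀ M, p k ∈ Finset.Ico K₀ M)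
    (hpinv : ∀ k ∈ Finset.Ico K₀ M, pinv k ∈ Finset.Ico K₀ M)
    (hpi : ∀ k ∈ Finset.Ico K₀ M, pinv (p k) = k)
    (hip : ∀ k ∈ Finset.Ico K₀ M, p (pinv k) = k) :
    pm K₀ M (fun k => n (p k)) (fun k i => sc (p k) i) = pm K₀ M n sc := by
  rw [pm, pm]
  exact Finset.sum_nbij' p pinv hp hpinv hpi hip (fun k _ => rfl)

lemma le_qn_iff {β : ℝ≥0∞} (hβ : 0 < β) (K₀ M : ℕ) (n : ℕ → ℕ) (sc : ℕ → ℕ → ℝ) (s : EReal) :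
    s ≤ sInf {t | β ≤ pm K₀ M n sc (Set.Iic t)}
      ↔ ∀ k ∈ Finset.Ico K₀ M, ∀ i ∈ Finset.range (n k),
          β ≤ pm K₀ M n sc (Set.Iic ((sc k i : EReal))) → s ≤ (sc k i : EReal) := by
  have hset : {t | β ≤ pm K₀ M n sc (Set.Iic t)}
      = {t | β ≤ G ((Finset.Ico K₀ M).sigma fun k => Finset.range (n k))
          (fun j => (sc j.1 j.2 : EReal))
          (fun j => (((M - K₀ : ℕ) : ℝ≥0∞) * (n j.1 : ℝ≥0∞))⁻¹) t} := by
    ext t; rw [Set.mem_setOf_eq, Set.mem_setOf_eq, pm_Iic]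
  rw [hset, q_le_iff_aux hβ]
  constructor
  · intro h k hk i hi hβ'
    rw [pm_Iic] at hβ'
    exact h ⟨k, i⟩ (Finset.mem_sigma.2 ⟨hk, hi⟩) hβ'
  · intro h j hj hβ'
    rw [Finset.mem_sigma] at hj
    rw [← pm_Iic] at hβ'
    exact h j.1 hj.1 j.2 hj.2 hβ'

lemma qn_attained {β : ℝ≥0∞} (hβ : 0 < β) (K₀ M : ℕ) (n : ℕ → ℕ) (sc : ℕ → ℕ → ℝ)
    (hne : {t : EReal | β ≤ pm K₀ M n sc (Set.Iic t)}.Nonempty) :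
    β ≤ pm K₀ M n sc (Set.Iic (sInf {t | β ≤ pm K₀ M n sc (Set.Iic t)})) := by
  have hset : {t | β ≤ pm K₀ M n sc (Set.Iic t)}
      = {t | β ≤ G ((Finset.Ico K₀ M).sigma fun k => Finset.range (n k))
          (fun j => (sc j.1 j.2 : EReal))
          (fun j => (((M - K₀ : ℕ) : ℝ≥0∞) * (n j.1 : ℝ≥0∞))⁻¹) t} := by
    ext t; rw [Set.mem_setOf_eq, Set.mem_setOf_eq, pm_Iic]
  rw [hset] at hne
  rw [hset, pm_Iic]
  exact q_mem hβ _ _ _ hne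

/-- Comparison of the two pooled measures. -/
lemma pm_le_pm_succ (K₀ K : ℕ) (hK₀ : K₀ < K) (n : ℕ → ℕ) (sc : ℕ → ℕ → ℝ) (t : EReal) :
    ((K - K₀ : ℕ) : ℝ≥0∞) / (((K - K₀ : ℕ) : ℝ≥0∞) + 1) * pm K₀ K n sc (Set.Iic t)
      ≤ pm K₀ (K + 1) n sc (Set.Iic t) := by
  set d : ℝ≥0∞ := ((K - K₀ : ℕ) : ℝ≥0∞) with hd
  have hd0 : d ≠ 0 := by simp only [hd, ne_eq, Nat.cast_eq_zero]; omega
  have hdt : d ≠ ⊤ := ENNReal.natCast_ne_top _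
  have hcast : (((K + 1) - K₀ : ℕ) : ℝ≥0∞) = d + 1 := by
    have h1 : (K + 1) - K₀ = (K - K₀) + 1 := by omega
    rw [hd, h1, Nat.cast_add, Nat.cast_one]
  rw [pm_apply _ _ _ _ measurableSet_Iic, pm_apply _ _ _ _ measurableSet_Iic]
  rw [Finset.mul_sum]
  refine le_trans (le_of_eq ?_)
    (Finset.sum_le_sum_of_subset (Finset.Ico_subset_Ico le_rfl (Nat.le_succ K)))
  refine Finset.sum_congr rfl fun k _ => ?_
  rw [Finset.mul_sum]
  refine Finset.sum_congr rfl fun i hi => ?_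
  rw [← mul_assoc, hcast]
  congr 1
  have hn0 : ((n k : ℕ) : ℝ≥0∞) ≠ 0 := by
    simp only [ne_eq, Nat.cast_eq_zero]
    have := Finset.mem_range.1 hi
    omega
  have hnt : ((n k : ℕ) : ℝ≥0∞) ≠ ⊤ := ENNReal.natCast_ne_top _
  rw [ENNReal.mul_inv (Or.inl hd0) (Or.inl hdt),
    ENNReal.mul_inv (Or.inl (by simp : d + 1 ≠ 0)) (Or.inl (by simp [hdt] : d + 1 ≠ ⊤))]
  rw [ENNReal.div_eq_inv_mul, ← mul_assoc]
  congr 1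
  rw [mul_comm (d + 1)⁻¹ d, mul_assoc, mul_comm d, mul_assoc]
  rw [ENNReal.inv_mul_cancel hd0 hdt, mul_one]

section Espace

variable {𝒵 : Type*} [MeasurableSpace 𝒵]

/-- Training groups extracted from the data vector. -/
def trE (K K₀ : ℕ) (w : Fin (K + 1) → ℕ × (ℕ → 𝒵)) : Fin K₀ → ℕ × (ℕ → 𝒵) :=
  fun j => if h : (j : ℕ) < K + 1 then w ⟨j, h⟩ else w ⟨0, Nat.succ_pos K⟩

/-- Scores computed from the data vector. -/
def scE (K K₀ : ℕ) (A : (Fin K₀ → ℕ × (ℕ → 𝒵)) → 𝒵 → ℝ)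
    (w : Fin (K + 1) → ℕ × (ℕ → 𝒵)) (k i : ℕ) : ℝ :=
  if h : k < K + 1 then A (trE K K₀ w) ((w ⟨k, h⟩).2 i) else 0

/-- Group sizes from the data vector. -/
def nE (K : ℕ) (w : Fin (K + 1) → ℕ × (ℕ → 𝒵)) (k : ℕ) : ℕ :=
  if h : k < K + 1 then (w ⟨k, h⟩).1 else 0

/-- Generic quantile threshold computed from the data vector. -/
def thr (K K₀ : ℕ) (A : (Fin K₀ → ℕ × (ℕ → 𝒵)) → 𝒵 → ℝ) (M : ℕ) (β : ℝ≥0∞)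
    (w : Fin (K + 1) → ℕ × (ℕ → 𝒵)) : EReal :=
  sInf {t | β ≤ pm K₀ M (nE K w) (scE K K₀ A w) (Set.Iic t)}

/-- Empirical CDF of group `k` evaluated at `t`. -/
def FAt (K K₀ : ℕ) (A : (Fin K₀ → ℕ × (ℕ → 𝒵)) → 𝒵 → ℝ) (k : ℕ) (t : EReal)
    (w : Fin (K + 1) → ℕ × (ℕ → 𝒵)) : ℝ≥0∞ :=
  ((nE K w k : ℕ) : ℝ≥0∞)⁻¹ *
    ∑ i ∈ Finset.range (nE K w k), if (scE K K₀ A w k i : EReal) ≤ t then 1 else 0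

/-- The event that a score `c w` is at most the threshold. -/
def evC (K K₀ : ℕ) (A : (Fin K₀ → ℕ × (ℕ → 𝒵)) → 𝒵 → ℝ) (M : ℕ) (β : ℝ≥0∞)
    (c : (Fin (K + 1) → ℕ × (ℕ → 𝒵)) → ℝ) : Set (Fin (K + 1) → ℕ × (ℕ → 𝒵)) :=
  {w | (c w : EReal) ≤ thr K K₀ A M β w}

section Meas

variable (K K₀ : ℕ) (A : (Fin K₀ → ℕ × (ℕ → 𝒵)) → 𝒵 → ℝ)
  (hA : Measurable fun p : (Fin K₀ → ℕ × (ℕ → 𝒵)) × 𝒵 => A p.1 p.2)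

lemma meas_trE : Measurable (trE K K₀ (𝒵 := 𝒵)) := by
  apply measurable_pi_lambda
  intro j
  unfold trE
  split_ifs with h
  · exact measurable_pi_apply _
  · exact measurable_pi_apply _

lemma meas_nE (k : ℕ) : Measurable fun w : Fin (K + 1) → ℕ × (ℕ → 𝒵) => nE K w k := by
  unfold nE
  split_ifs with h
  · exact measurable_fst.comp (measurable_pi_apply _)
  · exact measurable_const

include hA in
lemma meas_scE (k i : ℕ) :
    Measurable fun w : Fin (K + 1) → ℕ × (ℕ → 𝒵) => scE K K₀ A w k i := by
  unfold scE
  split_ifs with h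
  · exact hA.comp ((meas_trE K K₀).prodMk
      ((measurable_pi_apply i).comp (measurable_snd.comp (measurable_pi_apply _))))
  · exact measurable_const

include hA in
lemma meas_pm_iic (M : ℕ) {c : (Fin (K + 1) → ℕ × (ℕ → 𝒵)) → ℝ} (hc : Measurable c) :
    Measurable fun w => pm K₀ M (nE K w) (scE K K₀ A w) (Set.Iic ((c w : EReal))) := by
  have heq : ∀ w : Fin (K + 1) → ℕ × (ℕ → 𝒵),
      pm K₀ M (nE K w) (scE K K₀ A w) (Set.Iic ((c w : EReal)))
        = ∑ k ∈ Finset.Ico K₀ M, ∑' i : ℕ,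
            if i < nE K w k then
              (((M - K₀ : ℕ) : ℝ≥0∞) * (nE K w k : ℝ≥0∞))⁻¹ *
                (if scE K K₀ A w k i ≤ c w then 1 else 0) else 0 := by
    intro w
    rw [pm_apply _ _ _ _ measurableSet_Iic]
    refine Finset.sum_congr rfl fun k _ => ?_
    rw [tsum_eq_sum (s := Finset.range (nE K w k))
      (fun i hi => by rw [if_neg (fun hlt => hi (Finset.mem_range.2 hlt))])]
    refine Finset.sum_congr rfl fun i hi => ?_
    rw [if_pos (Finset.mem_range.1 hi)]
    congr 1
    by_cases h : scE K K₀ A w k i ≤ c w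
    · rw [if_pos h, Set.indicator_of_mem (Set.mem_Iic.2 (EReal.coe_le_coe_iff.2 h))]
      rfl
    · rw [if_neg h, Set.indicator_of_notMem
        (fun hc' => h (EReal.coe_le_coe_iff.1 (Set.mem_Iic.1 hc')))]
  simp only [heq]
  apply Finset.measurable_sum
  intro k _
  apply Measurable.ennreal_tsum
  intro i
  apply Measurable.ite
  · exact meas_nE K k (show MeasurableSet {m : ℕ | i < m} from trivial)
  · apply Measurable.mul
    · exact (measurable_from_top (f := fun m : ℕ =>
        (((M - K₀ : ℕ) : ℝ≥0∞) * (m : ℝ≥0∞))⁻¹)).comp (meas_nE K k)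
    · exact Measurable.ite (measurableSet_le (meas_scE K K₀ A hA k i) hc)
        measurable_const measurable_const
  · exact measurable_const

include hA in
lemma meas_evC (M : ℕ) (β : ℝ≥0∞) (hβ : 0 < β) {c : (Fin (K + 1) → ℕ × (ℕ → 𝒵)) → ℝ}
    (hc : Measurable c) : MeasurableSet (evC K K₀ A M β c) := by
  have heq : evC K K₀ A M β c = ⋂ k : ℕ, ⋂ i : ℕ,
      {w | k ∈ Finset.Ico K₀ M → i < nE K w k →
        (β ≤ pm K₀ M (nE K w) (scE K K₀ A w) (Set.Iic ((scE K K₀ A w k i : EReal)))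
          → c w ≤ scE K K₀ A w k i)} := by
    ext w
    simp only [evC, Set.mem_setOf_eq, Set.mem_iInter, thr]
    rw [le_qn_iff hβ]
    constructor
    · intro h k i hk hi hβ'
      exact EReal.coe_le_coe_iff.1 (h k hk i (Finset.mem_range.2 hi) hβ')
    · intro h k hk i hi hβ'
      exact EReal.coe_le_coe_iff.2 (h k i hk (Finset.mem_range.1 hi) hβ')
  rw [heq]
  refine MeasurableSet.iInter fun k => MeasurableSet.iInter fun i => ?_
  by_cases hk : k ∈ Finset.Ico K₀ M
  · have : {w : Fin (K + 1) → ℕ × (ℕ → 𝒵) | k ∈ Finset.Ico K₀ M → i < nE K w k →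
        (β ≤ pm K₀ M (nE K w) (scE K K₀ A w) (Set.Iic ((scE K K₀ A w k i : EReal)))
          → c w ≤ scE K K₀ A w k i)}
        = {w | ¬ i < nE K w k} ∪
          ({w | ¬ β ≤ pm K₀ M (nE K w) (scE K K₀ A w)
              (Set.Iic ((scE K K₀ A w k i : EReal)))} ∪
            {w | c w ≤ scE K K₀ A w k i}) := by
      ext w
      simp only [Set.mem_setOf_eq, Set.mem_union]
      tauto
    rw [this]
    refine MeasurableSet.union ?_ (MeasurableSet.union ?_ ?_)
    · exact (meas_nE K k (show MeasurableSet {m : ℕ | i < m} from trivial)).compl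
    · exact ((meas_pm_iic K K₀ A hA M (meas_scE K K₀ A hA k i)) measurableSet_Ici).compl
    · exact measurableSet_le hc (meas_scE K K₀ A hA k i)
  · have : {w : Fin (K + 1) → ℕ × (ℕ → 𝒵) | k ∈ Finset.Ico K₀ M → i < nE K w k →
        (β ≤ pm K₀ M (nE K w) (scE K K₀ A w) (Set.Iic ((scE K K₀ A w k i : EReal)))
          → c w ≤ scE K K₀ A w k i)} = Set.univ := by
      ext w
      simp only [Set.mem_setOf_eq, Set.mem_univ, iff_true]
      intro h
      exact absurd h hk
    rw [this]
    exact MeasurableSet.univ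

include hA in
lemma meas_FAt_thr (M : ℕ) (β : ℝ≥0∞) (hβ : 0 < β) (k : ℕ) :
    Measurable fun w : Fin (K + 1) → ℕ × (ℕ → 𝒵) =>
      FAt K K₀ A k (thr K K₀ A M β w) w := by
  have heq : ∀ w : Fin (K + 1) → ℕ × (ℕ → 𝒵),
      FAt K K₀ A k (thr K K₀ A M β w) w
        = ((nE K w k : ℕ) : ℝ≥0∞)⁻¹ * ∑' i : ℕ,
            if i < nE K w k then
              (evC K K₀ A M β (fun w' => scE K K₀ A w' k i)).indicator (fun _ => (1 : ℝ≥0∞)) w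
            else 0 := by
    intro w
    rw [FAt]
    congr 1
    rw [tsum_eq_sum (s := Finset.range (nE K w k))
      (fun i hi => by rw [if_neg (fun hlt => hi (Finset.mem_range.2 hlt))])]
    refine Finset.sum_congr rfl fun i hi => ?_
    rw [if_pos (Finset.mem_range.1 hi)]
    by_cases h : (scE K K₀ A w k i : EReal) ≤ thr K K₀ A M β w
    · rw [if_pos h, Set.indicator_of_mem (show w ∈ evC K K₀ A M β
        (fun w' => scE K K₀ A w' k i) from h)]
    · rw [if_neg h, Set.indicator_of_notMem (show w ∉ evC K K₀ A M β
        (fun w' => scE K K₀ A w' k i) from h)]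
  simp only [heq]
  apply Measurable.mul
  · exact (measurable_from_top (f := fun m : ℕ => ((m : ℕ) : ℝ≥0∞)⁻¹)).comp (meas_nE K k)
  · apply Measurable.ennreal_tsum
    intro i
    apply Measurable.ite
    · exact meas_nE K k (show MeasurableSet {m : ℕ | i < m} from trivial)
    · exact Measurable.indicator measurable_const (meas_evC K K₀ A hA M β hβ (meas_scE K K₀ A hA k i))
    · exact measurable_const

end Meas


section Perm

variable {𝒵 : Type*} [MeasurableSpace 𝒵] (K K₀ : ℕ) (A : (Fin K₀ → ℕ × (ℕ → 𝒵)) → 𝒵 → ℝ)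

lemma trE_comp (hK : K₀ < K + 1) (σ : Equiv.Perm (Fin (K + 1)))
    (hσ : ∀ j : Fin (K + 1), (j : ℕ) < K₀ → σ j = j) (w : Fin (K + 1) → ℕ × (ℕ → 𝒵)) :
    trE K K₀ (fun j => w (σ j)) = trE K K₀ w := by
  funext j
  unfold trE
  split_ifs with h
  · simp only
    rw [hσ ⟨j, h⟩ j.2]
  · exact absurd (j.2.trans hK) h

lemma nE_comp (σ : Equiv.Perm (Fin (K + 1))) (w : Fin (K + 1) → ℕ × (ℕ → 𝒵)) (k : ℕ) :
    nE K (fun j => w (σ j)) k = nE K w (permExt σ k) := by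
  by_cases h : k < K + 1
  · rw [nE, dif_pos h, permExt, dif_pos h, nE, dif_pos (σ ⟨k, h⟩).isLt]
  · rw [nE, dif_neg h, permExt, dif_neg h, nE, dif_neg h]

lemma scE_comp (hK : K₀ < K + 1) (σ : Equiv.Perm (Fin (K + 1)))
    (hσ : ∀ j : Fin (K + 1), (j : ℕ) < K₀ → σ j = j) (w : Fin (K + 1) → ℕ × (ℕ → 𝒵))
    (k i : ℕ) :
    scE K K₀ A (fun j => w (σ j)) k i = scE K K₀ A w (permExt σ k) i := by
  by_cases h : k < K + 1
  · rw [scE, dif_pos h, permExt, dif_pos h, scE, dif_pos (σ ⟨k, h⟩).isLt]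
    rw [trE_comp K K₀ hK σ hσ]
  · rw [scE, dif_neg h, permExt, dif_neg h, scE, dif_neg h]

/-- Invariance of the augmented pooled measure under a swap of two
calibration/test groups. -/
lemma pm_swap (hK : K₀ < K + 1) (a b : Fin (K + 1)) (ha : K₀ ≤ (a : ℕ)) (hb : K₀ ≤ (b : ℕ))
    (w : Fin (K + 1) → ℕ × (ℕ → 𝒵)) :
    pm K₀ (K + 1) (nE K fun j => w (Equiv.swap a b j)) (scE K K₀ A fun j => w (Equiv.swap a b j))
      = pm K₀ (K + 1) (nE K w) (scE K K₀ A w) := by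
  set σ := Equiv.swap a b with hσdef
  have hσ : ∀ j : Fin (K + 1), (j : ℕ) < K₀ → σ j = j := by
    intro j hj
    exact Equiv.swap_apply_of_ne_of_ne
      (fun hc => absurd (hc ▸ ha) (by omega)) (fun hc => absurd (hc ▸ hb) (by omega))
  have h1 : pm K₀ (K + 1) (nE K fun j => w (σ j)) (scE K K₀ A fun j => w (σ j))
      = pm K₀ (K + 1) (fun k => nE K w (permExt σ k)) (fun k i => scE K K₀ A w (permExt σ k) i) := by
    rw [funext (nE_comp K σ w)]
    exact pm_congr _ _ (fun k _ => rfl)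
      (fun k _ i _ => by rw [scE_comp K K₀ A hK σ hσ])
  rw [h1]
  have hmem : ∀ k ∈ Finset.Ico K₀ (K + 1), permExt σ k ∈ Finset.Ico K₀ (K + 1) := by
    intro k hk
    rw [Finset.mem_Ico] at hk ⊢
    rw [permExt, dif_pos hk.2]
    refine ⟨?_, (σ ⟨k, hk.2⟩).isLt⟩
    by_cases hca : (⟨k, hk.2⟩ : Fin (K + 1)) = a
    · rw [hσdef, hca, Equiv.swap_apply_left]; exact hb
    · by_cases hcb : (⟨k, hk.2⟩ : Fin (K + 1)) = b
      · rw [hσdef, hcb, Equiv.swap_apply_right]; exact ha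
      · rw [hσdef, Equiv.swap_apply_of_ne_of_ne hca hcb]; exact hk.1
  have hinv : ∀ k ∈ Finset.Ico K₀ (K + 1), permExt σ (permExt σ k) = k := by
    intro k hk
    rw [Finset.mem_Ico] at hk
    have hval : permExt σ k = ((σ ⟨k, hk.2⟩ : Fin (K + 1)) : ℕ) := by
      rw [permExt, dif_pos hk.2]
    rw [hval, permExt, dif_pos (σ ⟨k, hk.2⟩).isLt]
    simp only [Fin.eta]
    rw [hσdef, Equiv.swap_apply_self]
  exact pm_perm K₀ (K + 1) (nE K w) (scE K K₀ A w) (permExt σ) (permExt σ)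
    hmem hmem hinv hinv

lemma thr_swap (hK : K₀ < K + 1) (a b : Fin (K + 1)) (ha : K₀ ≤ (a : ℕ)) (hb : K₀ ≤ (b : ℕ))
    (β : ℝ≥0∞) (w : Fin (K + 1) → ℕ × (ℕ → 𝒵)) :
    thr K K₀ A (K + 1) β (fun j => w (Equiv.swap a b j)) = thr K K₀ A (K + 1) β w := by
  rw [thr, thr, pm_swap K K₀ A hK a b ha hb]

lemma FAt_comp (hK : K₀ < K + 1) (σ : Equiv.Perm (Fin (K + 1)))
    (hσ : ∀ j : Fin (K + 1), (j : ℕ) < K₀ → σ j = j) (k : ℕ) (t : EReal)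
    (w : Fin (K + 1) → ℕ × (ℕ → 𝒵)) :
    FAt K K₀ A k t (fun j => w (σ j)) = FAt K K₀ A (permExt σ k) t w := by
  rw [FAt, FAt, nE_comp K σ w]
  congr 1
  exact Finset.sum_congr rfl fun i _ => by rw [scE_comp K K₀ A hK σ hσ]

/-- Monotonicity of the empirical CDF. -/
lemma FAt_mono (k : ℕ) {t t' : EReal} (h : t ≤ t') (w : Fin (K + 1) → ℕ × (ℕ → 𝒵)) :
    FAt K K₀ A k t w ≤ FAt K K₀ A k t' w := by
  rw [FAt, FAt]
  refine mul_le_mul_right (Finset.sum_le_sum fun i _ => ?_) _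
  by_cases hc : (scE K K₀ A w k i : EReal) ≤ t
  · rw [if_pos hc, if_pos (hc.trans h)]
  · by_cases hc' : (scE K K₀ A w k i : EReal) ≤ t'
    · rw [if_neg hc, if_pos hc']; exact zero_le_one
    · rw [if_neg hc, if_neg hc']

lemma FAt_le_one (k : ℕ) (t : EReal) (w : Fin (K + 1) → ℕ × (ℕ → 𝒵)) :
    FAt K K₀ A k t w ≤ 1 := by
  rw [FAt]
  by_cases hn : nE K w k = 0
  · rw [hn]
    simp
  · calc ((nE K w k : ℕ) : ℝ≥0∞)⁻¹ *
        ∑ i ∈ Finset.range (nE K w k), (if (scE K K₀ A w k i : EReal) ≤ t then (1:ℝ≥0∞) else 0)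
        ≤ ((nE K w k : ℕ) : ℝ≥0∞)⁻¹ * ∑ i ∈ Finset.range (nE K w k), 1 := by
          refine mul_le_mul_right (Finset.sum_le_sum fun i _ => ?_) _
          split_ifs <;> simp
      _ = 1 := by
          rw [Finset.sum_const, Finset.card_range, nsmul_eq_mul, mul_one]
          exact ENNReal.inv_mul_cancel (by simpa using hn) (ENNReal.natCast_ne_top _)

/-- The small threshold is below the big threshold. -/
lemma thr_le_thr (hK₀ : K₀ < K) {β βp : ℝ≥0∞}
    (hrel : βp ≤ ((K - K₀ : ℕ) : ℝ≥0∞) / (((K - K₀ : ℕ) : ℝ≥0∞) + 1) * β)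
    (w : Fin (K + 1) → ℕ × (ℕ → 𝒵)) :
    thr K K₀ A (K + 1) βp w ≤ thr K K₀ A K β w := by
  rw [thr, thr]
  apply sInf_le_sInf
  intro t ht
  rw [Set.mem_setOf_eq] at ht ⊢
  calc βp ≤ ((K - K₀ : ℕ) : ℝ≥0∞) / (((K - K₀ : ℕ) : ℝ≥0∞) + 1) * β := hrel
    _ ≤ ((K - K₀ : ℕ) : ℝ≥0∞) / (((K - K₀ : ℕ) : ℝ≥0∞) + 1) *
        pm K₀ K (nE K w) (scE K K₀ A w) (Set.Iic t) := mul_le_mul_right ht _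
    _ ≤ pm K₀ (K + 1) (nE K w) (scE K K₀ A w) (Set.Iic t) :=
        pm_le_pm_succ K₀ K hK₀ _ _ t

/-- The averaged per-group CDFs give the augmented pooled measure. -/
lemma sum_FAt_eq_pm (hK : K₀ < K + 1) (t : EReal) (w : Fin (K + 1) → ℕ × (ℕ → 𝒵)) :
    ∑ k ∈ Finset.Ico K₀ (K + 1), ((((K + 1) - K₀ : ℕ) : ℝ≥0∞))⁻¹ * FAt K K₀ A k t w
      = pm K₀ (K + 1) (nE K w) (scE K K₀ A w) (Set.Iic t) := by
  rw [pm_apply _ _ _ _ measurableSet_Iic]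
  refine Finset.sum_congr rfl fun k _ => ?_
  rw [FAt, ← mul_assoc, Finset.mul_sum]
  refine Finset.sum_congr rfl fun i _ => ?_
  have hn0 : ((nE K w k : ℕ) : ℝ≥0∞) ≠ 0 := by
    simp only [ne_eq, Nat.cast_eq_zero]
    intro h
    exact absurd (h ▸ Finset.mem_range.1 ‹i ∈ Finset.range (nE K w k)›) (by omega)
  rw [ENNReal.mul_inv (Or.inl (by simp only [ne_eq, Nat.cast_eq_zero]; omega))
    (Or.inl (ENNReal.natCast_ne_top _))]
  congr 1
  by_cases h : (scE K K₀ A w k i : EReal) ≤ t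
  · rw [if_pos h, Set.indicator_of_mem (Set.mem_Iic.2 h)]
    rfl
  · rw [if_neg h, Set.indicator_of_notMem (fun hc => h (Set.mem_Iic.1 hc))]

/-- The augmented pooled CDF at its quantile reaches the level. -/
lemma pm_thr_ge (hK : K₀ < K + 1) {β : ℝ≥0∞} (hβ : 0 < β) (hβ1 : β ≤ 1)
    (w : Fin (K + 1) → ℕ × (ℕ → 𝒵)) (hn : ∀ k ∈ Finset.Ico K₀ (K + 1), 1 ≤ nE K w k) :
    β ≤ pm K₀ (K + 1) (nE K w) (scE K K₀ A w) (Set.Iic (thr K K₀ A (K + 1) β w)) := by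
  rw [thr]
  apply qn_attained hβ
  refine ⟨⊤, ?_⟩
  rw [Set.mem_setOf_eq, Set.Iic_top, pm_univ K₀ (K + 1) hK _ _ hn]
  exact hβ1

end Perm

section Prob

variable {Ω : Type*} [MeasurableSpace Ω]

lemma meas_hierData (L : ℕ) (N : ℕ → Ω → ℕ) (Z : ℕ → ℕ → Ω → 𝒵)
    (hNmeas : ∀ k, Measurable (N k)) (hZmeas : ∀ k i, Measurable (Z k i)) :
    Measurable (hierData L N Z) :=
  measurable_pi_lambda _ fun k =>
    Measurable.prodMk (hNmeas k) (measurable_pi_lambda _ fun i => hZmeas k i)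

/-- Step 3: exchangeability of the calibration/test groups. -/
lemma step3 (P : Measure Ω) (K K₀ : ℕ) (hK₀ : K₀ < K)
    (N : ℕ → Ω → ℕ) (Z : ℕ → ℕ → Ω → 𝒵)
    (hNmeas : ∀ k, Measurable (N k)) (hZmeas : ∀ k i, Measurable (Z k i))
    (hex1 : ∀ σ : Equiv.Perm (Fin (K + 1)),
      Measure.map (fun ω => fun j : Fin (K + 1) => hierData (K + 1) N Z ω (σ j)) P
        = Measure.map (hierData (K + 1) N Z) P)
    (A : (Fin K₀ → ℕ × (ℕ → 𝒵)) → 𝒵 → ℝ)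
    (hA : Measurable fun p : (Fin K₀ → ℕ × (ℕ → 𝒵)) × 𝒵 => A p.1 p.2)
    (β : ℝ≥0∞) (hβ : 0 < β) (k : ℕ) (hk : k ∈ Finset.Ico K₀ (K + 1)) :
    ∫⁻ w, FAt K K₀ A k (thr K K₀ A (K + 1) β w) w ∂(P.map (hierData (K + 1) N Z))
      = ∫⁻ w, FAt K K₀ A K (thr K K₀ A (K + 1) β w) w ∂(P.map (hierData (K + 1) N Z)) := by
  rw [Finset.mem_Ico] at hk
  set W := hierData (K + 1) N Z with hWdef
  have mW : Measurable W := meas_hierData _ _ _ hNmeas hZmeas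
  set kF : Fin (K + 1) := ⟨k, hk.2⟩ with hkF
  set KF : Fin (K + 1) := ⟨K, Nat.lt_succ_self K⟩ with hKF
  set σ : Equiv.Perm (Fin (K + 1)) := Equiv.swap kF KF with hσdef
  have hσfix : ∀ j : Fin (K + 1), (j : ℕ) < K₀ → σ j = j := by
    intro j hj
    exact Equiv.swap_apply_of_ne_of_ne
      (Fin.ne_of_val_ne (by simp only [hkF]; omega))
      (Fin.ne_of_val_ne (by simp only [hKF]; omega))
  have hW' : Measurable fun ω => fun j : Fin (K + 1) => W ω (σ j) :=
    measurable_pi_lambda _ fun j => (measurable_pi_apply (σ j)).comp mW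
  have hgK : Measurable fun w : Fin (K + 1) → ℕ × (ℕ → 𝒵) =>
      FAt K K₀ A K (thr K K₀ A (K + 1) β w) w := meas_FAt_thr K K₀ A hA (K + 1) β hβ K
  have hgk : Measurable fun w : Fin (K + 1) → ℕ × (ℕ → 𝒵) =>
      FAt K K₀ A k (thr K K₀ A (K + 1) β w) w := meas_FAt_thr K K₀ A hA (K + 1) β hβ k
  have hperm : permExt σ K = k := by
    rw [permExt, dif_pos (Nat.lt_succ_self K)]
    have h1 : (⟨K, Nat.lt_succ_self K⟩ : Fin (K + 1)) = KF := rfl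
    rw [h1, hσdef, Equiv.swap_apply_right]
  have hpt : ∀ ω, FAt K K₀ A K (thr K K₀ A (K + 1) β fun j => W ω (σ j)) (fun j => W ω (σ j))
      = FAt K K₀ A k (thr K K₀ A (K + 1) β (W ω)) (W ω) := by
    intro ω
    rw [hσdef, thr_swap K K₀ A (by omega) kF KF hk.1 (le_of_lt hK₀) β (W ω), ← hσdef]
    rw [FAt_comp K K₀ A (by omega) σ hσfix K _ (W ω), hperm]
  rw [lintegral_map hgk mW, lintegral_map hgK mW]
  have h2 := hex1 σ
  calc ∫⁻ ω, FAt K K₀ A k (thr K K₀ A (K + 1) β (W ω)) (W ω) ∂P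
      = ∫⁻ ω, FAt K K₀ A K (thr K K₀ A (K + 1) β fun j => W ω (σ j))
          (fun j => W ω (σ j)) ∂P := by
        refine lintegral_congr fun ω => ?_
        rw [hpt ω]
    _ = ∫⁻ w, FAt K K₀ A K (thr K K₀ A (K + 1) β w) w
          ∂(Measure.map (fun ω => fun j : Fin (K + 1) => W ω (σ j)) P) :=
        (lintegral_map hgK hW').symm
    _ = ∫⁻ w, FAt K K₀ A K (thr K K₀ A (K + 1) β w) w ∂(Measure.map W P) := by rw [h2]
    _ = ∫⁻ ω, FAt K K₀ A K (thr K K₀ A (K + 1) β (W ω)) (W ω) ∂P := lintegral_map hgK mW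

/-- Step 1: within-group exchangeability of the test group. -/
lemma step1 (P : Measure Ω) [IsProbabilityMeasure P] (K K₀ : ℕ) (hK₀ : K₀ < K)
    (N : ℕ → Ω → ℕ) (Z : ℕ → ℕ → Ω → 𝒵) (hN : ∀ ω, 1 ≤ N K ω)
    (hNmeas : ∀ k, Measurable (N k)) (hZmeas : ∀ k i, Measurable (Z k i))
    (hex2 : ∀ m : ℕ, 0 < P {ω | N K ω = m} → ∀ σ : Equiv.Perm (Fin m),
      Measure.map (hierData (K + 1) N fun k' i => if k' = K then Z k' (permExt σ i) else Z k' i)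
          (ProbabilityTheory.cond P {ω | N K ω = m})
        = Measure.map (hierData (K + 1) N Z) (ProbabilityTheory.cond P {ω | N K ω = m}))
    (A : (Fin K₀ → ℕ × (ℕ → 𝒵)) → 𝒵 → ℝ)
    (hA : Measurable fun p : (Fin K₀ → ℕ × (ℕ → 𝒵)) × 𝒵 => A p.1 p.2)
    (β : ℝ≥0∞) (hβ : 0 < β) :
    (P.map (hierData (K + 1) N Z)) (evC K K₀ A K β fun w => scE K K₀ A w K 0)
      = ∫⁻ w, FAt K K₀ A K (thr K K₀ A K β w) w ∂(P.map (hierData (K + 1) N Z)) := by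
  set W := hierData (K + 1) N Z with hWdef
  have mW : Measurable W := meas_hierData _ _ _ hNmeas hZmeas
  have hKK1 : K < K + 1 := Nat.lt_succ_self K
  set B : ℕ → Set (Fin (K + 1) → ℕ × (ℕ → 𝒵)) :=
    fun i => evC K K₀ A K β fun w => scE K K₀ A w K i with hBdef
  have mB : ∀ i, MeasurableSet (B i) :=
    fun i => meas_evC K K₀ A hA K β hβ (meas_scE K K₀ A hA K i)
  have hg : Measurable fun w : Fin (K + 1) → ℕ × (ℕ → 𝒵) =>
      FAt K K₀ A K (thr K K₀ A K β w) w := meas_FAt_thr K K₀ A hA K β hβ K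
  rw [Measure.map_apply mW (mB 0), lintegral_map hg mW]
  set S : ℕ → Set Ω := fun m => {ω | N K ω = m} with hSdef
  have mS : ∀ m, MeasurableSet (S m) := fun m => hNmeas K (measurableSet_singleton m)
  have hSU : (⋃ m, S m) = Set.univ := by
    ext ω
    simp only [Set.mem_iUnion, Set.mem_univ, iff_true]
    exact ⟨N K ω, rfl⟩
  have hSd : Pairwise (Function.onFun Disjoint S) := by
    intro m m' hne
    rw [Function.onFun, Set.disjoint_left]
    intro ω h1 h2
    exact hne (h1.symm.trans h2)
  have hL : P (W ⁻¹' B 0) = ∑' m, P (W ⁻¹' B 0 ∩ S m) := by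
    conv_lhs => rw [← Set.inter_univ (W ⁻¹' B 0), ← hSU, Set.inter_iUnion]
    exact measure_iUnion
      (fun m m' h => ((hSd h).mono Set.inter_subset_right Set.inter_subset_right))
      (fun m => (mW (mB 0)).inter (mS m))
  have hR : ∫⁻ ω, FAt K K₀ A K (thr K K₀ A K β (W ω)) (W ω) ∂P
      = ∑' m, ∫⁻ ω in S m, FAt K K₀ A K (thr K K₀ A K β (W ω)) (W ω) ∂P := by
    rw [← setLIntegral_univ, ← hSU, lintegral_iUnion mS hSd]
  rw [hL, hR]
  refine tsum_congr fun m => ?_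
  by_cases hm : P (S m) = 0
  · have h1 : P (W ⁻¹' B 0 ∩ S m) = 0 :=
      le_antisymm (le_trans (measure_mono Set.inter_subset_right) hm.le) zero_le
    have h2 : ∫⁻ ω in S m, FAt K K₀ A K (thr K K₀ A K β (W ω)) (W ω) ∂P = 0 := by
      refine le_antisymm ?_ zero_le
      calc ∫⁻ ω in S m, FAt K K₀ A K (thr K K₀ A K β (W ω)) (W ω) ∂P
          ≤ ∫⁻ _ω in S m, 1 ∂P := lintegral_mono fun ω => FAt_le_one K K₀ A K _ (W ω)
        _ = P (S m) := by rw [lintegral_one, Measure.restrict_apply_univ]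
        _ = 0 := hm
    rw [h1, h2]
  · have hm0 : 0 < m := by
      rcases Nat.eq_zero_or_pos m with h0 | h0
      · exfalso
        apply hm
        have : S m = ∅ := by
          ext ω
          simp only [hSdef, Set.mem_setOf_eq, Set.mem_empty_iff_false, iff_false, h0]
          have := hN ω
          omega
        rw [this, measure_empty]
      · exact h0
    have hkey : ∀ i, i < m → P (S m ∩ W ⁻¹' B i) = P (S m ∩ W ⁻¹' B 0) := by
      intro i hi
      set σ : Equiv.Perm (Fin m) := Equiv.swap ⟨0, hm0⟩ ⟨i, hi⟩ with hσdef
      have hPpos : 0 < P {ω | N K ω = m} := lt_of_le_of_ne zero_le (Ne.symm hm)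
      have h := hex2 m hPpos σ
      set Z' : ℕ → ℕ → Ω → 𝒵 :=
        fun k' i' => if k' = K then Z k' (permExt σ i') else Z k' i' with hZ'def
      have mW' : Measurable (hierData (K + 1) N Z') := by
        refine meas_hierData _ _ _ hNmeas fun k' i' => ?_
        by_cases hc : k' = K
        · simp only [hZ'def, if_pos hc]
          exact hZmeas _ _
        · simp only [hZ'def, if_neg hc]
          exact hZmeas _ _
      have happ := congrArg (fun μ : Measure (Fin (K + 1) → ℕ × (ℕ → 𝒵)) => μ (B 0)) h
      rw [Measure.map_apply mW' (mB 0), Measure.map_apply mW (mB 0)] at happ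
      have hpre : hierData (K + 1) N Z' ⁻¹' (B 0) = W ⁻¹' (B i) := by
        ext ω
        have htr : trE K K₀ (hierData (K + 1) N Z' ω) = trE K K₀ (W ω) := by
          funext j
          have hj : (j : ℕ) < K + 1 := by
            have := j.2
            omega
          rw [trE, trE, dif_pos hj, dif_pos hj]
          show (N (j : ℕ) ω, fun i' => Z' (j : ℕ) i' ω) = (N (j : ℕ) ω, fun i' => Z (j : ℕ) i' ω)
          congr 1
          funext i'
          have hjK : (j : ℕ) ≠ K := by
            have := j.2
            omega
          simp only [hZ'def, if_neg hjK]
        have hnE : nE K (hierData (K + 1) N Z' ω) = nE K (W ω) := rfl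
        have hscE : ∀ k' i', k' ≠ K →
            scE K K₀ A (hierData (K + 1) N Z' ω) k' i' = scE K K₀ A (W ω) k' i' := by
          intro k' i' hne
          by_cases hc : k' < K + 1
          · rw [scE, dif_pos hc, scE, dif_pos hc, htr]
            show A (trE K K₀ (W ω)) (Z' k' i' ω) = A (trE K K₀ (W ω)) (Z k' i' ω)
            simp only [hZ'def, if_neg hne]
          · rw [scE, dif_neg hc, scE, dif_neg hc]
        have hscK : ∀ i', scE K K₀ A (hierData (K + 1) N Z' ω) K i'
            = scE K K₀ A (W ω) K (permExt σ i') := by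
          intro i'
          rw [scE, dif_pos hKK1, scE, dif_pos hKK1, htr]
          show A (trE K K₀ (W ω)) (Z' K i' ω) = A (trE K K₀ (W ω)) (Z K (permExt σ i') ω)
          simp only [hZ'def, if_pos rfl]
        have hpm : pm K₀ K (nE K (hierData (K + 1) N Z' ω)) (scE K K₀ A (hierData (K + 1) N Z' ω))
            = pm K₀ K (nE K (W ω)) (scE K K₀ A (W ω)) := by
          rw [hnE]
          refine pm_congr K₀ K (fun _ _ => rfl) fun k' hk' i' _ => ?_
          rw [Finset.mem_Ico] at hk'
          exact hscE k' i' (by omega)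
        have hperm0 : permExt σ 0 = i := by
          rw [permExt, dif_pos hm0]
          have h1 : (⟨0, hm0⟩ : Fin m) = ⟨0, hm0⟩ := rfl
          rw [hσdef]
          rw [Equiv.swap_apply_left]
        simp only [Set.mem_preimage, hBdef, evC, Set.mem_setOf_eq, thr]
        rw [hpm, hscK 0, hperm0]
      rw [hpre] at happ
      have hSeq : {ω | N K ω = m} = S m := rfl
      rw [hSeq, ProbabilityTheory.cond_apply (mS m), ProbabilityTheory.cond_apply (mS m)] at happ
      have hPne : P (S m) ≠ 0 := hm
      have hPnt : P (S m) ≠ ⊤ := measure_ne_top P _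
      have hmul := congrArg (fun x => P (S m) * x) happ
      simpa only [← mul_assoc, ENNReal.mul_inv_cancel hPne hPnt, one_mul] using hmul
    have hnEm : ∀ ω, ω ∈ S m → nE K (W ω) K = m := by
      intro ω hω
      rw [nE, dif_pos hKK1]
      exact hω
    have hmeasind : ∀ i : ℕ, Measurable fun ω =>
        (W ⁻¹' B i).indicator (1 : Ω → ℝ≥0∞) ω :=
      fun i => Measurable.indicator measurable_const (mW (mB i))
    have hRm : ∫⁻ ω in S m, FAt K K₀ A K (thr K K₀ A K β (W ω)) (W ω) ∂P
        = (m : ℝ≥0∞)⁻¹ * ∑ i ∈ Finset.range m, P (W ⁻¹' B i ∩ S m) := by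
      rw [setLIntegral_congr_fun (mS m)
        (fun ω hω =>
          show FAt K K₀ A K (thr K K₀ A K β (W ω)) (W ω)
            = (m : ℝ≥0∞)⁻¹ * ∑ i ∈ Finset.range m,
                (W ⁻¹' B i).indicator (1 : Ω → ℝ≥0∞) ω from ?_)]
      · rw [lintegral_const_mul _ (Finset.measurable_sum _ fun i _ => hmeasind i)]
        congr 1
        rw [lintegral_finset_sum _ fun i _ => hmeasind i]
        refine Finset.sum_congr rfl fun i _ => ?_
        rw [lintegral_indicator_one (mW (mB i)), Measure.restrict_apply (mW (mB i))]
      · rw [FAt, hnEm ω hω]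
        congr 1
        refine Finset.sum_congr rfl fun i _ => ?_
        by_cases hc : (scE K K₀ A (W ω) K i : EReal) ≤ thr K K₀ A K β (W ω)
        · rw [if_pos hc, Set.indicator_of_mem (show ω ∈ W ⁻¹' B i from hc)]
          rfl
        · rw [if_neg hc, Set.indicator_of_notMem (show ω ∉ W ⁻¹' B i from hc)]
    rw [hRm]
    have hsum : ∑ i ∈ Finset.range m, P (W ⁻¹' B i ∩ S m)
        = m * P (W ⁻¹' B 0 ∩ S m) := by
      rw [Finset.sum_congr rfl fun i hi => ?_]
      · rw [Finset.sum_const, Finset.card_range, nsmul_eq_mul]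
      · rw [Set.inter_comm, hkey i (Finset.mem_range.1 hi), Set.inter_comm]
    rw [hsum, ← mul_assoc, ENNReal.inv_mul_cancel
      (by simp only [ne_eq, Nat.cast_eq_zero]; omega : (m : ℝ≥0∞) ≠ 0) (ENNReal.natCast_ne_top m), one_mul]

end Prob

end Espace

end PoolingAux


open PoolingAux in
/-- **Proposition (Coverage of Pooling CDFs, lower bound).**
Under hierarchical exchangeability, the Pooling-CDFs prediction set, with score fitted on
the training groups `0, …, K₀-1` via the algorithm `A` and with threshold the
`(1-α)`-quantile of the pooled empirical CDF of the calibration scores, satisfies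
`P(Y_test ∈ Ĉ(X_test)) ≥ 1 - α - (1-α)/(K₁+1)`. -/
theorem pooling_cdfs_coverage_lower
    {𝒳 𝒴 Ω : Type*} [MeasurableSpace 𝒳] [MeasurableSpace 𝒴] [MeasurableSpace Ω]
    (P : Measure Ω) [IsProbabilityMeasure P]
    (K K₀ : ℕ) (hK₀ : K₀ < K)
    (N : ℕ → Ω → ℕ) (Z : ℕ → ℕ → Ω → 𝒳 × 𝒴)
    (hN : ∀ k ω, 1 ≤ N k ω)
    (hNmeas : ∀ k, Measurable (N k)) (hZmeas : ∀ k i, Measurable (Z k i))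
    (hexch : HierExch (K + 1) P N Z)
    (α : ℝ) (hα₀ : 0 < α) (hα₁ : α < 1)
    (A : (Fin K₀ → ℕ × (ℕ → 𝒳 × 𝒴)) → 𝒳 × 𝒴 → ℝ)
    (hA : Measurable fun p : (Fin K₀ → ℕ × (ℕ → 𝒳 × 𝒴)) × (𝒳 × 𝒴) => A p.1 p.2) :
    ENNReal.ofReal (1 - α - (1 - α) / (((K - K₀ : ℕ) : ℝ) + 1)) ≤
      P {ω | (A (hierData K₀ N Z ω) (Z K 0 ω) : EReal)
          ≤ poolThreshold α K₀ K (fun k => N k ω)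
              fun k i => A (hierData K₀ N Z ω) (Z k i ω)} := by
  classical
  obtain ⟨hex1, hex2⟩ := hexch
  set W := hierData (K + 1) N Z with hWdef
  have mW : Measurable W := meas_hierData (K + 1) N Z hNmeas hZmeas
  have hdr : (0 : ℝ) < ((K - K₀ : ℕ) : ℝ) := by
    have : 0 < K - K₀ := by omega
    exact_mod_cast this
  set β : ℝ≥0∞ := ENNReal.ofReal (1 - α) with hβdef
  set βp : ℝ≥0∞ := ENNReal.ofReal ((1 - α) * ((K - K₀ : ℕ) : ℝ) / (((K - K₀ : ℕ) : ℝ) + 1))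
    with hβpdef
  have hβpos : 0 < β := ENNReal.ofReal_pos.2 (by linarith)
  have hβppos : 0 < βp := ENNReal.ofReal_pos.2 (div_pos (mul_pos (by linarith) hdr) (by linarith))
  have hβp1 : βp ≤ 1 := by
    rw [hβpdef]
    refine ENNReal.ofReal_le_one.2 ?_
    rw [div_le_one (by positivity)]
    nlinarith
  have hrel : βp ≤ ((K - K₀ : ℕ) : ℝ≥0∞) / (((K - K₀ : ℕ) : ℝ≥0∞) + 1) * β := by
    have hofd : (((K - K₀ : ℕ) : ℝ≥0∞) / (((K - K₀ : ℕ) : ℝ≥0∞) + 1))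
        = ENNReal.ofReal (((K - K₀ : ℕ) : ℝ) / (((K - K₀ : ℕ) : ℝ) + 1)) := by
      rw [ENNReal.ofReal_div_of_pos (by positivity)]
      congr 1
      · exact (ENNReal.ofReal_natCast _).symm
      · rw [ENNReal.ofReal_add (by positivity) zero_le_one, ENNReal.ofReal_natCast,
          ENNReal.ofReal_one]
    rw [hβpdef, hβdef, hofd, ← ENNReal.ofReal_mul (by positivity)]
    apply le_of_eq
    congr 1
    field_simp
  -- identification of the event
  have hsc : ∀ ω : Ω, ∀ k, k < K + 1 → ∀ i,
      scE K K₀ A (W ω) k i = A (hierData K₀ N Z ω) (Z k i ω) := by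
    intro ω k hk i
    have htr : trE K K₀ (W ω) = hierData K₀ N Z ω := by
      funext j
      rw [trE, dif_pos (show (j : ℕ) < K + 1 by have := j.2; omega)]
      rfl
    rw [scE, dif_pos hk, htr]
    rfl
  have hset : {ω | (A (hierData K₀ N Z ω) (Z K 0 ω) : EReal)
          ≤ poolThreshold α K₀ K (fun k => N k ω)
              fun k i => A (hierData K₀ N Z ω) (Z k i ω)}
      = W ⁻¹' (evC K K₀ A K β fun w => scE K K₀ A w K 0) := by
    ext ω
    have hthr : poolThreshold α K₀ K (fun k => N k ω)
        (fun k i => A (hierData K₀ N Z ω) (Z k i ω)) = thr K K₀ A K β (W ω) := by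
      show sInf {t : EReal | ENNReal.ofReal (1 - α) ≤ pm K₀ K (fun k => N k ω)
        (fun k i => A (hierData K₀ N Z ω) (Z k i ω)) (Set.Iic t)} = _
      rw [thr, hβdef]
      have hpmeq : pm K₀ K (fun k => N k ω)
          (fun k i => A (hierData K₀ N Z ω) (Z k i ω))
          = pm K₀ K (nE K (W ω)) (scE K K₀ A (W ω)) := by
        refine pm_congr K₀ K (fun k hk => ?_) (fun k hk i _ => ?_)
        · rw [Finset.mem_Ico] at hk
          rw [nE, dif_pos (by omega : k < K + 1)]
          rfl
        · rw [Finset.mem_Ico] at hk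
          rw [hsc ω k (by omega) i]
      rw [hpmeq]
    simp only [Set.mem_setOf_eq, Set.mem_preimage, evC]
    rw [hsc ω K (Nat.lt_succ_self K) 0, hthr]
  rw [hset, ← Measure.map_apply mW (meas_evC K K₀ A hA K β hβpos (meas_scE K K₀ A hA K 0))]
  haveI : IsProbabilityMeasure (P.map W) := Measure.isProbabilityMeasure_map mW.aemeasurable
  rw [step1 P K K₀ hK₀ N Z (hN K) hNmeas hZmeas
    (fun m hm σ => hex2 K (Nat.lt_succ_self K) m hm σ) A hA β hβpos]
  have hmono : ∫⁻ w, FAt K K₀ A K (thr K K₀ A (K + 1) βp w) w ∂(P.map W)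
      ≤ ∫⁻ w, FAt K K₀ A K (thr K K₀ A K β w) w ∂(P.map W) :=
    lintegral_mono fun w => FAt_mono K K₀ A K (thr_le_thr K K₀ A hK₀ hrel w) w
  refine le_trans ?_ hmono
  -- average over the calibration and test groups
  set c : ℝ≥0∞ := (((K + 1) - K₀ : ℕ) : ℝ≥0∞) with hcdef
  have hcne0 : c ≠ 0 := by
    rw [hcdef]
    simp only [ne_eq, Nat.cast_eq_zero]
    omega
  have hcnet : c ≠ ⊤ := ENNReal.natCast_ne_top _
  have havg : ∫⁻ w, FAt K K₀ A K (thr K K₀ A (K + 1) βp w) w ∂(P.map W)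
      = ∑ k ∈ Finset.Ico K₀ (K + 1),
          c⁻¹ * ∫⁻ w, FAt K K₀ A k (thr K K₀ A (K + 1) βp w) w ∂(P.map W) := by
    rw [Finset.sum_congr rfl (fun k hk => by
      rw [step3 P K K₀ hK₀ N Z hNmeas hZmeas hex1 A hA βp hβppos k hk])]
    rw [Finset.sum_const, Nat.card_Ico, nsmul_eq_mul, ← hcdef, ← mul_assoc,
      ENNReal.mul_inv_cancel hcne0 hcnet, one_mul]
  rw [havg]
  have hswap : ∑ k ∈ Finset.Ico K₀ (K + 1),
        c⁻¹ * ∫⁻ w, FAt K K₀ A k (thr K K₀ A (K + 1) βp w) w ∂(P.map W)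
      = ∫⁻ w, ∑ k ∈ Finset.Ico K₀ (K + 1),
          c⁻¹ * FAt K K₀ A k (thr K K₀ A (K + 1) βp w) w ∂(P.map W) := by
    rw [lintegral_finset_sum _ (fun k _ =>
      (meas_FAt_thr K K₀ A hA (K + 1) βp hβppos k).const_mul c⁻¹)]
    exact Finset.sum_congr rfl fun k _ =>
      (lintegral_const_mul c⁻¹ (meas_FAt_thr K K₀ A hA (K + 1) βp hβppos k)).symm
  rw [hswap]
  have hgood : ∀ᵐ w ∂(P.map W), ∀ k ∈ Finset.Ico K₀ (K + 1), 1 ≤ nE K w k := by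
    have hGm : MeasurableSet {w : Fin (K + 1) → ℕ × (ℕ → 𝒳 × 𝒴) |
        ¬ ∀ k ∈ Finset.Ico K₀ (K + 1), 1 ≤ nE K w k} := by
      have : {w : Fin (K + 1) → ℕ × (ℕ → 𝒳 × 𝒴) |
          ∀ k ∈ Finset.Ico K₀ (K + 1), 1 ≤ nE K w k}
          = ⋂ k ∈ Finset.Ico K₀ (K + 1), {w | 1 ≤ nE K w k} := by
        ext w
        simp only [Set.mem_setOf_eq, Set.mem_iInter]
      have h2 : MeasurableSet {w : Fin (K + 1) → ℕ × (ℕ → 𝒳 × 𝒴) |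
          ∀ k ∈ Finset.Ico K₀ (K + 1), 1 ≤ nE K w k} := by
        rw [this]
        exact MeasurableSet.biInter (Set.to_countable _)
          (fun k _ => meas_nE K k (show MeasurableSet {m : ℕ | 1 ≤ m} from trivial))
      exact h2.compl
    rw [ae_iff, Measure.map_apply mW hGm]
    have : W ⁻¹' {w | ¬ ∀ k ∈ Finset.Ico K₀ (K + 1), 1 ≤ nE K w k} = ∅ := by
      ext ω
      simp only [Set.mem_preimage, Set.mem_setOf_eq, Set.mem_empty_iff_false, iff_false,
        not_not]
      intro k hk
      rw [Finset.mem_Ico] at hk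
      rw [nE, dif_pos (by omega : k < K + 1)]
      exact hN k ω
    rw [this, measure_empty]
  have hfinal : βp ≤ ∫⁻ w, ∑ k ∈ Finset.Ico K₀ (K + 1),
      c⁻¹ * FAt K K₀ A k (thr K K₀ A (K + 1) βp w) w ∂(P.map W) := by
    have h1 : βp = ∫⁻ _w, βp ∂(P.map W) := by
      rw [lintegral_const, measure_univ, mul_one]
    refine le_trans (le_of_eq h1) (lintegral_mono_ae (hgood.mono fun w hw => ?_))
    rw [sum_FAt_eq_pm K K₀ A (by omega) _ w]
    exact pm_thr_ge K K₀ A (by omega) hβppos hβp1 w hw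
  refine le_trans (le_of_eq ?_) hfinal
  rw [hβpdef]
  congr 1
  field_simp
  ring
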